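/- Let d ≥ 1 and let P be an i.i.d. probability measure on Ω. Suppose f and g are nonnegative functions in L¹(Ω,P) such that for P-almost every ω ∈ Ω, lim_{n→∞} Σ_{x∈ℤ^d} |P_ω^0(X_n = x) − ℙ^0(X_n = x) · f(σ_x ω)| = 0 and lim_{n→∞} Σ_{x∈ℤ^d} |P_ω^0(X_n = x) − ℙ^0(X_n = x) · g(σ_x ω)| = 0. Then f = g P-almost surely. -/

import Mathlib

open MeasureTheory Filter
open scoped ENNReal

noncomputable section

namespace RWRE

/-- sites of the lattice `ℤ^d`. -/
abbrev Site (d : ℕ) := Fin d → ℤ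

/-- index set for the `2d` nearest-neighbour steps: `(i, true) ↦ e_i`, `(i, false) ↦ -e_i`. -/
abbrev StepIdx (d : ℕ) := Fin d × Bool

/-- the signed unit vector corresponding to a step index. -/
def stepVec {d : ℕ} (s : StepIdx d) : Site d :=
  fun j => if j = s.1 then (if s.2 then 1 else -1) else 0

/-- probability vectors on the `2d` nearest-neighbour steps. -/
abbrev EnvAt (d : ℕ) := {p : StepIdx d → ℝ // (∀ s, 0 ≤ p s) ∧ ∑ s, p s = 1}

/-- the space of environments `Ω = (M_d)^{ℤ^d}`. -/
abbrev Env (d : ℕ) := Site d → EnvAt d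

/-- the space of trajectories. -/
abbrev Path (d : ℕ) := ℕ → Site d

/-- the shift of the environment by `x`. -/
def shift {d : ℕ} (x : Site d) (ω : Env d) : Env d := fun y => ω (x + y)

/-- transition probability in environment `ω` from site `y` by increment `v`. -/
def envP {d : ℕ} (ω : Env d) (y v : Site d) : ℝ≥0∞ :=
  ∑ s : StepIdx d, if v = stepVec s then ENNReal.ofReal ((ω y).1 s) else 0

/-- `μ` is the quenched law of the walk started at `x` in the environment `ω`: a
probability measure on path space whose cylinder probabilities are the products of
the transition probabilities of `ω`. -/
def IsQuenched {d : ℕ} (ω : Env d) (x : Site d) (μ : Measure (Path d)) : Prop :=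
  IsProbabilityMeasure μ ∧
    ∀ (n : ℕ) (γ : ℕ → Site d),
      μ {f | ∀ i ≤ n, f i = γ i} =
        (if γ 0 = x then 1 else 0) *
          ∏ i ∈ Finset.range n, envP ω (γ i) (γ (i + 1) - γ i)

/-- `Pq` is a measurable family of quenched laws. -/
def IsQuenchedFamily {d : ℕ} (Pq : Env d → Site d → Measure (Path d)) : Prop :=
  (∀ ω x, IsQuenched ω x (Pq ω x)) ∧
    ∀ (x : Site d) (A : Set (Path d)), MeasurableSet A →
      Measurable fun ω => Pq ω x A

/-- the annealed probability `ℙ^x(A) = ∫ P_ω^x(A) dP(ω)` of a path event. -/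
def ann {d : ℕ} (P : Measure (Env d)) (Pq : Env d → Site d → Measure (Path d))
    (x : Site d) (A : Set (Path d)) : ℝ≥0∞ :=
  ∫⁻ ω, Pq ω x A ∂P

/-- the annealed expectation `𝔼^x[g]` of a real path functional. -/
def annE {d : ℕ} (P : Measure (Env d)) (Pq : Env d → Site d → Measure (Path d))
    (x : Site d) (g : Path d → ℝ) : ℝ :=
  ∫ ω, (∫ f, g f ∂(Pq ω x)) ∂P

/-- `P` is an i.i.d. measure on the space of environments: its finite-dimensional
marginals are products of a fixed single-site probability measure. -/
def IsIID {d : ℕ} (P : Measure (Env d)) : Prop :=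
  ∃ ν : Measure (EnvAt d), IsProbabilityMeasure ν ∧
    ∀ (s : Finset (Site d)) (B : Site d → Set (EnvAt d)),
      (∀ x, MeasurableSet (B x)) →
        P {ω | ∀ x ∈ s, ω x ∈ B x} = ∏ x ∈ s, ν (B x)

/-- uniform ellipticity of `P`. -/
def UniformlyElliptic {d : ℕ} (P : Measure (Env d)) : Prop :=
  ∃ η : ℝ, 0 < η ∧ ∀ s : StepIdx d, P {ω : Env d | (ω 0).1 s < η} = 0

/-- a lattice point, viewed as a real vector. -/
def toR {d : ℕ} (x : Site d) : Fin d → ℝ := fun i => (x i : ℝ)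

/-- inner product of a lattice point with a real direction. -/
def dotR {d : ℕ} (x : Site d) (ℓ : Fin d → ℝ) : ℝ := ∑ i, (x i : ℝ) * ℓ i

/-- the euclidean norm of a real vector. -/
def norm2R {d : ℕ} (ℓ : Fin d → ℝ) : ℝ := Real.sqrt (∑ i, ℓ i ^ 2)

/-- the event `{T_L^{(-ℓ)} < T_L^{(ℓ)}}` that the walk reaches level `L` in
direction `-ℓ` strictly before reaching level `L` in direction `ℓ`. -/
def backtrackEvent {d : ℕ} (ℓ : Fin d → ℝ) (L : ℝ) : Set (Path d) :=
  {f | ∃ n, L ≤ dotR (f n) (-ℓ) ∧ ∀ m ≤ n, dotR (f m) ℓ < L}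

/-- condition `(T_γ)` in the direction `ℓ₀`. -/
def CondTAt {d : ℕ} (P : Measure (Env d)) (Pq : Env d → Site d → Measure (Path d))
    (γ : ℝ) (ℓ₀ : Fin d → ℝ) : Prop :=
  ∃ ε : ℝ, 0 < ε ∧ ∀ ℓ : Fin d → ℝ, norm2R ℓ = 1 → norm2R (ℓ - ℓ₀) < ε →
    ∃ C : ℝ, ∀ L : ℝ, 0 < L →
      ann P Pq 0 (backtrackEvent ℓ L) ≤ ENNReal.ofReal (C * Real.exp (-(L ^ γ)))

/-- condition `(T_γ)` in some direction. -/
def CondT {d : ℕ} (P : Measure (Env d)) (Pq : Env d → Site d → Measure (Path d))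
    (γ : ℝ) : Prop :=
  ∃ ℓ₀ : Fin d → ℝ, norm2R ℓ₀ = 1 ∧ CondTAt P Pq γ ℓ₀

/-- condition `(𝒫)`: condition `(T_γ)` holds for some `γ ∈ (0,1)` in some direction. -/
def CondP {d : ℕ} (P : Measure (Env d)) (Pq : Env d → Site d → Measure (Path d)) : Prop :=
  ∃ γ : ℝ, 0 < γ ∧ γ < 1 ∧ CondT P Pq γ

/-- condition `(𝒫)` in a given direction. -/
def CondPAt {d : ℕ} (P : Measure (Env d)) (Pq : Env d → Site d → Measure (Path d))
    (ℓ₀ : Fin d → ℝ) : Prop :=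
  ∃ γ : ℝ, 0 < γ ∧ γ < 1 ∧ CondTAt P Pq γ ℓ₀

/-- `Q` is invariant with respect to the point of view of the particle. -/
def InvariantPOV {d : ℕ} (Q : Measure (Env d)) : Prop :=
  ∀ g : Env d → ℝ, Measurable g → (∃ C : ℝ, ∀ ω, |g ω| ≤ C) →
    ∫ ω, (∑ s : StepIdx d, (ω 0).1 s * g (shift (stepVec s) ω)) ∂Q = ∫ ω, g ω ∂Q

/-- superpolynomial decay: `g N = N^{-ξ(1)}`. -/
def Superpoly (g : ℕ → ℝ) : Prop :=
  ∀ k : ℕ, Tendsto (fun N : ℕ => (N : ℝ) ^ k * g N) atTop (nhds 0)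

/-- the first coordinate `⟨x, e₁⟩` of a lattice point. -/
def firstCoord {d : ℕ} (x : Fin d → ℤ) : ℤ := if h : 0 < d then x ⟨0, h⟩ else 0

/-- the first coordinate `⟨ℓ, e₁⟩` of a real vector. -/
def firstCoordR {d : ℕ} (ℓ : Fin d → ℝ) : ℝ := if h : 0 < d then ℓ ⟨0, h⟩ else 0

/-- the first standard basis vector, as a real direction. -/
def e1R (d : ℕ) : Fin d → ℝ := fun i => if (i : ℕ) = 0 then 1 else 0

/-- `R_k(N) = ⌊exp((log log N)^{k+1})⌋`. -/
def Rk (k N : ℕ) : ℕ := ⌊Real.exp (Real.log (Real.log (N : ℝ)) ^ (k + 1))⌋₊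

/-- the `ℓ¹`-norm of a lattice point. -/
def norm1 {d : ℕ} (x : Site d) : ℤ := ∑ i, |x i|

/-- the parallelogram `𝒫(z,N)` (relative to the asymptotic direction `ϑ`). -/
def para {d : ℕ} (ϑ : Fin d → ℝ) (z : Site d) (N : ℕ) : Set (Site d) :=
  {x | |firstCoord (x - z)| < (N : ℤ) ^ 2 ∧
    ∀ i, |((x - z) i : ℝ) - (firstCoord (x - z) : ℝ) / firstCoordR ϑ * ϑ i|
      < (N : ℝ) * (Rk 5 N : ℝ)}

/-- the middle third `𝒫̃(z,N)` of the parallelogram. -/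
def paraMid {d : ℕ} (ϑ : Fin d → ℝ) (z : Site d) (N : ℕ) : Set (Site d) :=
  {x | 3 * |firstCoord (x - z)| < (N : ℤ) ^ 2 ∧
    ∀ i, 3 * |((x - z) i : ℝ) - (firstCoord (x - z) : ℝ) / firstCoordR ϑ * ϑ i|
      < (N : ℝ) * (Rk 5 N : ℝ)}

/-- the boundary `∂𝒫(z,N)`. -/
def paraBdry {d : ℕ} (ϑ : Fin d → ℝ) (z : Site d) (N : ℕ) : Set (Site d) :=
  {x | x ∉ para ϑ z N ∧ ∃ y ∈ para ϑ z N, norm1 (x - y) = 1}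

/-- the right boundary `∂⁺𝒫(z,N)`. -/
def paraBdryPlus {d : ℕ} (ϑ : Fin d → ℝ) (z : Site d) (N : ℕ) : Set (Site d) :=
  {x | x ∈ paraBdry ϑ z N ∧ firstCoord (x - z) = (N : ℤ) ^ 2}

/-- the walk hits the set `A`. -/
def hits {d : ℕ} (A : Set (Site d)) (f : Path d) : Prop := ∃ n, f n ∈ A

/-- the hitting time `T_A` of a set of sites. -/
def hitTime {d : ℕ} (A : Set (Site d)) (f : Path d) : ℕ := sInf {n | f n ∈ A}

/-- the hyperplane `H_M = {x : ⟨x,e₁⟩ = M}`. -/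
def hyper {d : ℕ} (M : ℤ) : Set (Site d) := {x | firstCoord x = M}

/-- the event that the walk hits `A`, at a time belonging to `I`, and in a point of `Δ`. -/
def exitEvent {d : ℕ} (A Δ : Set (Site d)) (I : Set ℕ) : Set (Path d) :=
  {f | hits A f ∧ f (hitTime A f) ∈ Δ ∧ hitTime A f ∈ I}

/-- the `d`-dimensional cube with corner `a` and side length `L`. -/
def cube {d : ℕ} (a : Site d) (L : ℕ) : Set (Site d) :=
  {x | ∀ i, a i ≤ x i ∧ x i < a i + (L : ℤ)}

/-- the same cube, as a finite set. -/
def cubeF {d : ℕ} (a : Site d) (L : ℕ) : Finset (Site d) :=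
  Fintype.piFinset fun i => Finset.Ico (a i) (a i + (L : ℤ))

/-- a `(d-1)`-dimensional cube of side length `L` inside the hyperplane `H_m`. -/
def cubeHyp {d : ℕ} (m : ℤ) (a : Site d) (L : ℕ) : Set (Site d) :=
  {x | firstCoord x = m ∧ ∀ i : Fin d, (i : ℕ) ≠ 0 → a i ≤ x i ∧ x i < a i + (L : ℤ)}

/-- the time interval `[t, t + L)`. -/
def interval (t L : ℕ) : Set ℕ := {n | t ≤ n ∧ n < t + L}

/-- `S` is the set of corners of a partition of `ℤ^d` into cubes of side length `L`. -/
def IsCubePartition {d : ℕ} (L : ℕ) (S : Set (Site d)) : Prop :=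
  (∀ x : Site d, ∃ a ∈ S, x ∈ cube a L) ∧
    ∀ a ∈ S, ∀ b ∈ S, a ≠ b → Disjoint (cube a L) (cube b L)

/-- `t` is a regeneration time of the path `f` in direction `e₁`. -/
def IsRegen {d : ℕ} (f : Path d) (t : ℕ) : Prop :=
  (∀ s < t, firstCoord (f s) < firstCoord (f t)) ∧
    firstCoord (f t) < firstCoord (f (t + 1)) ∧
    ∀ s, t + 1 < s → firstCoord (f (t + 1)) < firstCoord (f s)

/-- the `k`-th regeneration time `τ_k` (with the convention `τ₀ = 0`). -/
def regTime {d : ℕ} (f : Path d) : ℕ → ℕ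
  | 0 => 0
  | k + 1 => sInf {t | regTime f k < t ∧ IsRegen f t}

/-- the event `B_N` that each of the first `N²` regeneration gaps is at most `R(N)`. -/
def BN {d : ℕ} (N : ℕ) : Set (Path d) :=
  {f | ∀ k, 1 ≤ k → k ≤ N ^ 2 → regTime f k - regTime f (k - 1) ≤ Rk 1 N}

/-- `ϑ` is the asymptotic direction `lim Xₙ/‖Xₙ‖₂` of the walk, annealed a.s. -/
def DirSpeed {d : ℕ} (P : Measure (Env d)) (Pq : Env d → Site d → Measure (Path d))
    (ϑ : Fin d → ℝ) : Prop :=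
  ann P Pq 0 {f | ¬ Tendsto (fun n => fun i => toR (f n) i / norm2R (toR (f n)))
    atTop (nhds ϑ)} = 0

/-- the σ-algebra generated by the environment in the half space `⟨z,e₁⟩ ≤ m`. -/
def sigmaUpTo (d : ℕ) (m : ℤ) : MeasurableSpace (Env d) :=
  MeasurableSpace.comap
    (fun ω => (fun z : {z : Site d // firstCoord z ≤ m} => ω z.1)) inferInstance


/-! ### Auxiliary lemmas for Statement 16 -/

lemma measurable_shift {d : ℕ} (x : Site d) : Measurable (shift (d := d) x) :=
  measurable_pi_lambda _ fun y => measurable_pi_apply (x + y)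

lemma measurableSet_eventEq {d : ℕ} (n : ℕ) (x : Site d) :
    MeasurableSet {p : Path d | p n = x} := by
  have : {p : Path d | p n = x} = (fun p : Path d => p n) ⁻¹' {x} := by ext p; simp
  rw [this]
  exact measurable_pi_apply n (MeasurableSet.singleton x)

open Classical in
lemma iid_shift_invariant {d : ℕ} (P : Measure (Env d)) [IsProbabilityMeasure P]
    (hIID : IsIID P) (x : Site d) : Measure.map (shift x) P = P := by
  obtain ⟨ν, hν, hmarg⟩ := hIID
  set C : Set (Set (Env d)) :=
    {A | ∃ s : Finset (Site d), ∃ B : Site d → Set (EnvAt d),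
      (∀ y, MeasurableSet (B y)) ∧ A = {ω | ∀ y ∈ s, ω y ∈ B y}} with hC
  have hmemMeas : ∀ A ∈ C, MeasurableSet A := by
    rintro A ⟨s, B, hB, rfl⟩
    have : {ω : Env d | ∀ y ∈ s, ω y ∈ B y} = ⋂ y ∈ s, (fun ω : Env d => ω y) ⁻¹' B y := by
      ext ω; simp
    rw [this]
    exact MeasurableSet.biInter s.countable_toSet fun y _ => measurable_pi_apply y (hB y)
  have hgen : (inferInstance : MeasurableSpace (Env d)) = MeasurableSpace.generateFrom C := by
    refine le_antisymm ?_ (MeasurableSpace.generateFrom_le hmemMeas)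
    show MeasurableSpace.pi ≤ MeasurableSpace.generateFrom C
    refine iSup_le fun y => ?_
    rintro s ⟨B, hB, rfl⟩
    refine MeasurableSpace.measurableSet_generateFrom ?_
    refine ⟨{y}, fun z => if z = y then B else Set.univ, ?_, ?_⟩
    · intro z; by_cases hz : z = y <;> simp [hz, hB]
    · ext ω; simp
  have hpi : IsPiSystem C := by
    rintro A ⟨s₁, B₁, hB₁, rfl⟩ A₂ ⟨s₂, B₂, hB₂, rfl⟩ -
    refine ⟨s₁ ∪ s₂, fun z => (if z ∈ s₁ then B₁ z else Set.univ) ∩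
      (if z ∈ s₂ then B₂ z else Set.univ), ?_, ?_⟩
    · intro z
      refine MeasurableSet.inter ?_ ?_ <;> (split <;> simp [hB₁, hB₂, *])
    · ext ω
      simp only [Set.mem_inter_iff, Set.mem_setOf_eq, Finset.mem_union]
      constructor
      · rintro ⟨h1, h2⟩ z hz
        constructor <;> (split <;> simp_all)
      · intro h
        constructor
        · intro z hz
          have := (h z (Or.inl hz)).1
          rwa [if_pos hz] at this
        · intro z hz
          have := (h z (Or.inr hz)).2
          rwa [if_pos hz] at this
  have : IsProbabilityMeasure (Measure.map (shift x) P) :=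
    Measure.isProbabilityMeasure_map (measurable_shift x).aemeasurable
  refine ext_of_generate_finite C hgen hpi ?_ (by simp)
  rintro A ⟨s, B, hB, rfl⟩
  rw [Measure.map_apply (measurable_shift x) (hmemMeas _ ⟨s, B, hB, rfl⟩)]
  have hpre : (shift x) ⁻¹' {ω : Env d | ∀ y ∈ s, ω y ∈ B y}
      = {ω : Env d | ∀ z ∈ s.image (fun y => x + y), ω z ∈ B (z - x)} := by
    ext ω
    simp only [Set.mem_preimage, Set.mem_setOf_eq, shift, Finset.mem_image]
    constructor
    · rintro h z ⟨y, hy, rfl⟩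
      simpa [add_sub_cancel_left] using h y hy
    · intro h y hy
      have := h (x + y) ⟨y, hy, rfl⟩
      simpa [add_sub_cancel_left] using this
  rw [hpre, hmarg _ _ (fun z => hB (z - x)), hmarg _ _ hB]
  rw [Finset.prod_image (by intro a _ b _ h; exact add_left_cancel h)]
  simp [add_sub_cancel_left]

/-- the finite box of sites reachable in `n` steps. -/
def box (d n : ℕ) : Finset (Site d) :=
  Fintype.piFinset fun _ : Fin d => Finset.Icc (-(n:ℤ)) (n:ℤ)

lemma not_mem_box {d n : ℕ} {x : Site d} (hx : x ∉ box d n) : ∃ j, (n:ℤ) < |x j| := by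
  by_contra h
  push_neg at h
  exact hx (by simpa [box, Fintype.mem_piFinset, Finset.mem_Icc, abs_le] using h)

lemma envP_ne_zero {d : ℕ} {ω : Env d} {y v : Site d} (h : envP ω y v ≠ 0) :
    ∃ s, v = stepVec s := by
  by_contra hc
  push_neg at hc
  exact h (Finset.sum_eq_zero fun s _ => if_neg (hc s))

lemma abs_stepVec_le {d : ℕ} (s : StepIdx d) (j : Fin d) : |stepVec s j| ≤ 1 := by
  unfold stepVec
  split_ifs <;> simp

lemma quenched_eventEq_zero {d : ℕ} (ω : Env d) (μ : Measure (Path d))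
    (hμ : IsQuenched ω 0 μ) (n : ℕ) (x : Site d) (hx : x ∉ box d n) :
    μ {p : Path d | p n = x} = 0 := by
  obtain ⟨j, hj⟩ := not_mem_box hx
  set V := {v : Fin (n+1) → Site d // v ⟨n, n.lt_succ_self⟩ = x} with hV
  have hcover : {p : Path d | p n = x} ⊆
      ⋃ v : V, {f : Path d | ∀ i ≤ n,
        f i = (fun i : ℕ => if h : i < n + 1 then v.1 ⟨i, h⟩ else 0) i} := by
    intro f hf
    refine Set.mem_iUnion.2 ⟨⟨fun i => f i.1, hf⟩, ?_⟩
    intro i hi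
    simp only [Set.mem_setOf_eq]
    rw [dif_pos (Nat.lt_succ_of_le hi)]
  refine le_antisymm ?_ (by simp)
  refine le_trans (measure_mono hcover) ?_
  refine le_trans (measure_iUnion_le _) ?_
  have hzero : ∀ v : V,
      μ {f : Path d | ∀ i ≤ n,
        f i = (fun i : ℕ => if h : i < n + 1 then v.1 ⟨i, h⟩ else 0) i} = 0 := by
    intro v
    set γ : ℕ → Site d := fun i => if h : i < n + 1 then v.1 ⟨i, h⟩ else 0 with hγ
    rw [hμ.2 n γ]
    by_cases h0 : γ 0 = 0
    · rw [if_pos h0, one_mul]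
      by_contra hprod
      have hfac : ∀ i ∈ Finset.range n, envP ω (γ i) (γ (i+1) - γ i) ≠ 0 :=
        Finset.prod_ne_zero_iff.mp hprod
      have hbound : ∀ m, m ≤ n → |γ m j| ≤ (m : ℤ) := by
        intro m
        induction m with
        | zero => intro _; simp [h0]
        | succ k ih =>
          intro hk
          obtain ⟨s, hs⟩ := envP_ne_zero (hfac k (Finset.mem_range.2 hk))
          have hstep : γ (k+1) j = γ k j + stepVec s j := by
            have : γ (k+1) - γ k = stepVec s := hs
            have := congrFun this j
            simp only [Pi.sub_apply] at this
            linarith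
          rw [hstep]
          have h1 := abs_stepVec_le s j
          have h2 := ih (le_of_lt hk)
          calc |γ k j + stepVec s j| ≤ |γ k j| + |stepVec s j| := abs_add_le _ _
            _ ≤ (k : ℤ) + 1 := by linarith
            _ = ((k+1 : ℕ) : ℤ) := by push_cast; ring
      have hγn : γ n = x := by
        rw [hγ]; simp only [dif_pos n.lt_succ_self]; exact v.2
      have := hbound n le_rfl
      rw [hγn] at this
      omega
    · rw [if_neg h0, zero_mul]
  simp only [hzero, tsum_zero, le_refl]

lemma sum_quenched_eq_one {d : ℕ} (ω : Env d) (μ : Measure (Path d))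
    (hμ : IsQuenched ω 0 μ) (n : ℕ) :
    ∑ x ∈ box d n, μ {p : Path d | p n = x} = 1 := by
  haveI := hμ.1
  have hdisj : Pairwise (Function.onFun Disjoint fun x : Site d => {p : Path d | p n = x}) := by
    intro a b hab
    simp only [Function.onFun, Set.disjoint_left]
    rintro p hp hp'
    exact hab (hp ▸ hp')
  have htsum : ∑' x : Site d, μ {p : Path d | p n = x} = 1 := by
    rw [← measure_iUnion hdisj (fun x => measurableSet_eventEq n x)]
    have : ⋃ x : Site d, {p : Path d | p n = x} = Set.univ := by
      ext p; simp
    rw [this, measure_univ]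
  rw [← htsum]
  exact (tsum_eq_sum fun x hx => quenched_eventEq_zero ω μ hμ n x hx).symm

/-- Uniqueness of the prefactor in the local limit theorem. -/
theorem statement16 (d : ℕ) (hd : 1 ≤ d)
    (P : Measure (Env d)) [IsProbabilityMeasure P]
    (Pq : Env d → Site d → Measure (Path d)) (hPq : IsQuenchedFamily Pq)
    (hIID : IsIID P)
    (f g : Env d → ℝ)
    (hfm : Measurable f) (hf0 : ∀ ω, 0 ≤ f ω) (hfi : Integrable f P)
    (hgm : Measurable g) (hg0 : ∀ ω, 0 ≤ g ω) (hgi : Integrable g P)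
    (hf : ∀ᵐ ω ∂P, Tendsto (fun n : ℕ => ∑' x : Site d,
      |(Pq ω 0 {p : Path d | p n = x}).toReal -
        (ann P Pq 0 {p : Path d | p n = x}).toReal * f (shift x ω)|)
      atTop (nhds 0))
    (hg : ∀ᵐ ω ∂P, Tendsto (fun n : ℕ => ∑' x : Site d,
      |(Pq ω 0 {p : Path d | p n = x}).toReal -
        (ann P Pq 0 {p : Path d | p n = x}).toReal * g (shift x ω)|)
      atTop (nhds 0)) :
    f =ᵐ[P] g := by
  -- notation
  set E : ℕ → Site d → Set (Path d) := fun n x => {p : Path d | p n = x} with hE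
  have hq0 : ∀ (ω : Env d) (n : ℕ) (x : Site d), x ∉ box d n → Pq ω 0 (E n x) = 0 :=
    fun ω n x hx => quenched_eventEq_zero ω _ (hPq.1 ω 0) n x hx
  have hA0 : ∀ (n : ℕ) (x : Site d), x ∉ box d n → ann P Pq 0 (E n x) = 0 := by
    intro n x hx
    unfold ann
    rw [lintegral_congr fun ω => hq0 ω n x hx]
    simp
  have hAle1 : ∀ (n : ℕ) (x : Site d), ann P Pq 0 (E n x) ≤ 1 := by
    intro n x
    unfold ann
    calc ∫⁻ ω, Pq ω 0 (E n x) ∂P ≤ ∫⁻ _, 1 ∂P := by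
          refine lintegral_mono fun ω => ?_
          haveI := (hPq.1 ω 0).1
          exact prob_le_one
      _ = 1 := by simp
  have hAsum : ∀ n : ℕ, ∑ x ∈ box d n, ann P Pq 0 (E n x) = 1 := by
    intro n
    unfold ann
    rw [← lintegral_finset_sum _ (fun x _ => hPq.2 0 (E n x) (measurableSet_eventEq n x))]
    rw [lintegral_congr fun ω => sum_quenched_eq_one ω _ (hPq.1 ω 0) n]
    simp
  -- real-valued annealed probabilities
  set aR : ℕ → Site d → ℝ := fun n x => (ann P Pq 0 (E n x)).toReal with haR
  have haRnn : ∀ n x, 0 ≤ aR n x := fun n x => ENNReal.toReal_nonneg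
  have haRsum : ∀ n : ℕ, ∑ x ∈ box d n, aR n x = 1 := by
    intro n
    rw [← ENNReal.toReal_sum (fun x _ => ne_top_of_le_ne_top ENNReal.one_ne_top (hAle1 n x))]
    rw [hAsum n]
    simp
  -- the truncated difference
  set φ : Env d → ℝ := fun ω => min |f ω - g ω| 1 with hφ
  have hφm : Measurable φ := ((hfm.sub hgm).abs).min measurable_const
  have hφnn : ∀ ω, 0 ≤ φ ω := fun ω => le_min (abs_nonneg _) zero_le_one
  have hφle1 : ∀ ω, φ ω ≤ 1 := fun ω => min_le_right _ _
  have hφint : Integrable φ P := by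
    refine (integrable_const (1 : ℝ)).mono' hφm.aestronglyMeasurable ?_
    filter_upwards with ω
    rw [Real.norm_eq_abs, abs_of_nonneg (hφnn ω)]
    exact hφle1 ω
  have hPinv : ∀ x : Site d, Measure.map (shift x) P = P :=
    fun x => iid_shift_invariant P hIID x
  have hshiftφ : ∀ x : Site d, ∫ ω, φ (shift x ω) ∂P = ∫ ω, φ ω ∂P := by
    intro x
    calc ∫ ω, φ (shift x ω) ∂P
        = ∫ ω, φ ω ∂(Measure.map (shift x) P) :=
          (integral_map (measurable_shift x).aemeasurable hφm.aestronglyMeasurable).symm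
      _ = ∫ ω, φ ω ∂P := by rw [hPinv x]
  -- the key averaged quantity
  set T : ℕ → Env d → ℝ := fun n ω => ∑ x ∈ box d n, aR n x * φ (shift x ω) with hT
  have hTmeas : ∀ n, Measurable (T n) := by
    intro n
    exact Finset.measurable_sum _ fun x _ =>
      (measurable_const.mul (hφm.comp (measurable_shift x)))
  have hTnn : ∀ n ω, 0 ≤ T n ω := by
    intro n ω
    exact Finset.sum_nonneg fun x _ => mul_nonneg (haRnn n x) (hφnn _)
  have hTle1 : ∀ n ω, T n ω ≤ 1 := by
    intro n ω
    calc T n ω ≤ ∑ x ∈ box d n, aR n x * 1 :=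
          Finset.sum_le_sum fun x _ =>
            mul_le_mul_of_nonneg_left (hφle1 _) (haRnn n x)
      _ = 1 := by simpa using haRsum n
  have hTint : ∀ n, ∫ ω, T n ω ∂P = ∫ ω, φ ω ∂P := by
    intro n
    rw [integral_finset_sum]
    · have : ∀ x ∈ box d n, ∫ ω, aR n x * φ (shift x ω) ∂P = aR n x * ∫ ω, φ ω ∂P := by
        intro x _
        rw [integral_const_mul, hshiftφ x]
      rw [Finset.sum_congr rfl this, ← Finset.sum_mul, haRsum n, one_mul]
    · intro x _
      refine Integrable.const_mul ?_ _
      refine (integrable_const (1 : ℝ)).mono'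
        ((hφm.comp (measurable_shift x)).aestronglyMeasurable) ?_
      filter_upwards with ω
      rw [Real.norm_eq_abs, abs_of_nonneg (hφnn _)]
      exact hφle1 _
  -- a.e. convergence of T n to 0
  have hTtendsto : ∀ᵐ ω ∂P, Tendsto (fun n => T n ω) atTop (nhds 0) := by
    filter_upwards [hf, hg] with ω hfω hgω
    have hre : ∀ (h : Env d → ℝ) (n : ℕ),
        (∑' x : Site d, |(Pq ω 0 {p : Path d | p n = x}).toReal -
          (ann P Pq 0 {p : Path d | p n = x}).toReal * h (shift x ω)|) =
        ∑ x ∈ box d n, |(Pq ω 0 (E n x)).toReal -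
          (ann P Pq 0 (E n x)).toReal * h (shift x ω)| := by
      intro h n
      refine tsum_eq_sum fun x hx => ?_
      rw [show {p : Path d | p n = x} = E n x from rfl, hq0 ω n x hx, hA0 n x hx]
      simp
    have hfω' : Tendsto (fun n => ∑ x ∈ box d n, |(Pq ω 0 (E n x)).toReal -
        aR n x * f (shift x ω)|) atTop (nhds 0) := by
      refine hfω.congr fun n => ?_
      exact hre f n
    have hgω' : Tendsto (fun n => ∑ x ∈ box d n, |(Pq ω 0 (E n x)).toReal -
        aR n x * g (shift x ω)|) atTop (nhds 0) := by
      refine hgω.congr fun n => ?_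
      exact hre g n
    have hbound : ∀ n, T n ω ≤
        (∑ x ∈ box d n, |(Pq ω 0 (E n x)).toReal - aR n x * f (shift x ω)|) +
        (∑ x ∈ box d n, |(Pq ω 0 (E n x)).toReal - aR n x * g (shift x ω)|) := by
      intro n
      rw [← Finset.sum_add_distrib]
      refine Finset.sum_le_sum fun x _ => ?_
      have h1 : aR n x * φ (shift x ω) ≤ aR n x * |f (shift x ω) - g (shift x ω)| :=
        mul_le_mul_of_nonneg_left (min_le_left _ _) (haRnn n x)
      have h2 : aR n x * |f (shift x ω) - g (shift x ω)|
          = |aR n x * f (shift x ω) - aR n x * g (shift x ω)| := by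
        rw [← mul_sub, abs_mul, abs_of_nonneg (haRnn n x)]
      have h3 : |aR n x * f (shift x ω) - aR n x * g (shift x ω)| ≤
          |(Pq ω 0 (E n x)).toReal - aR n x * f (shift x ω)| +
          |(Pq ω 0 (E n x)).toReal - aR n x * g (shift x ω)| := by
        have := abs_sub ((Pq ω 0 (E n x)).toReal - aR n x * g (shift x ω))
          ((Pq ω 0 (E n x)).toReal - aR n x * f (shift x ω))
        have heq : ((Pq ω 0 (E n x)).toReal - aR n x * g (shift x ω)) -
            ((Pq ω 0 (E n x)).toReal - aR n x * f (shift x ω)) =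
            aR n x * f (shift x ω) - aR n x * g (shift x ω) := by ring
        calc |aR n x * f (shift x ω) - aR n x * g (shift x ω)|
            = |((Pq ω 0 (E n x)).toReal - aR n x * g (shift x ω)) -
              ((Pq ω 0 (E n x)).toReal - aR n x * f (shift x ω))| := by rw [heq]
          _ ≤ |(Pq ω 0 (E n x)).toReal - aR n x * g (shift x ω)| +
              |(Pq ω 0 (E n x)).toReal - aR n x * f (shift x ω)| := abs_sub _ _
          _ = _ := by ring
      linarith
    have hsum0 : Tendsto (fun n =>
        (∑ x ∈ box d n, |(Pq ω 0 (E n x)).toReal - aR n x * f (shift x ω)|) +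
        (∑ x ∈ box d n, |(Pq ω 0 (E n x)).toReal - aR n x * g (shift x ω)|))
        atTop (nhds 0) := by
      simpa using hfω'.add hgω'
    exact squeeze_zero (fun n => hTnn n ω) hbound hsum0
  -- bounded convergence
  have hlim : Tendsto (fun n => ∫ ω, T n ω ∂P) atTop (nhds (∫ _ : Env d, (0:ℝ) ∂P)) := by
    refine tendsto_integral_of_dominated_convergence (fun _ => (1:ℝ))
      (fun n => (hTmeas n).aestronglyMeasurable) (integrable_const 1) ?_ ?_
    · intro n
      filter_upwards with ω
      rw [Real.norm_eq_abs, abs_of_nonneg (hTnn n ω)]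
      exact hTle1 n ω
    · filter_upwards [hTtendsto] with ω hω
      exact hω
  have hφ0 : ∫ ω, φ ω ∂P = 0 := by
    have h1 : Tendsto (fun _ : ℕ => ∫ ω, φ ω ∂P) atTop (nhds 0) := by
      simpa [hTint] using (by simpa using hlim : Tendsto (fun n => ∫ ω, T n ω ∂P) atTop (nhds 0))
    exact tendsto_nhds_unique tendsto_const_nhds h1
  have hφae : φ =ᵐ[P] 0 :=
    (integral_eq_zero_iff_of_nonneg hφnn hφint).mp hφ0
  filter_upwards [hφae] with ω hω
  have hmin : min |f ω - g ω| 1 = 0 := hω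
  have habs : |f ω - g ω| = 0 := by
    rcases min_eq_iff.mp hmin with h | h
    · exact h.1
    · linarith [h.1]
  have := abs_eq_zero.mp habs
  linarith [sub_eq_zero.mp this]

end RWRE
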